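/- Let q be a prime power, let Θ(t) = t^{-1} Σ_{i=0}^∞ s_i t^{-i} ∈ F_q((t^{-1})) be irrational with coefficient sequence S = (s_i)_{i≥0}, and let k ≥ 0. Write ⟨t^k·Θ(t)⟩ = [0; A_1^{[Θ·t^k]}, A_2^{[Θ·t^k]}, ...]. Then for every m ≥ 0, the number-wall entry W̃[m,k] is nonzero if and only if m + 1 = Σ_{i=1}^{j} deg A_i^{[Θ·t^k]} for some j ≥ 1; consequently the k-th diagonal of the number wall of S consists of successive blocks of deg A_i^{[Θ·t^k]} − 1 zero entries separated by single nonzero entries. -/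

import Mathlib

open scoped Classical
open Filter Polynomial

noncomputable section

namespace EscapeOfMass

variable {K : Type*} [Field K]

/-- The element `t` of `K((t⁻¹))`, modelled as the Laurent series field `K⸨X⸩`
in the variable `X = t⁻¹`; thus `t = X⁻¹ = single (-1) 1`. -/
def tLS (K : Type*) [Field K] : LaurentSeries K := HahnSeries.single (-1 : ℤ) 1

/-- The polynomial part of a Laurent series in `K((t⁻¹))` (the terms with
non-negative powers of `t`, i.e. non-positive powers of `X`). -/
def polyPart (f : LaurentSeries K) : LaurentSeries K :=
  { coeff := fun n => if n ≤ 0 then f.coeff n else 0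
    isPWO_support' := by
      refine f.isPWO_support'.mono fun n hn => ?_
      simp only [Function.mem_support, ne_eq] at hn ⊢
      intro h
      exact hn (by simp [h]) }

/-- The fractional part `⟨f⟩` of a Laurent series in `K((t⁻¹))`. -/
def fracPart (f : LaurentSeries K) : LaurentSeries K := f - polyPart f

/-- The complete quotients of the continued fraction expansion of `f`. -/
def cfQuot (f : LaurentSeries K) : ℕ → LaurentSeries K
  | 0 => f
  | i + 1 => (cfQuot f i - polyPart (cfQuot f i))⁻¹

/-- The partial quotients `A_i` of the continued fraction expansion of `f`. -/
def cfPQ (f : LaurentSeries K) (i : ℕ) : LaurentSeries K := polyPart (cfQuot f i)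

/-- The degree (as an integer) of a Laurent series viewed in `K((t⁻¹))`:
for a nonzero polynomial in `t` this is the usual degree. -/
def degZ (f : LaurentSeries K) : ℤ := -f.order

/-- `f` is a rational Laurent series, i.e. lies in `K(t)`. -/
def IsRatLS (f : LaurentSeries K) : Prop := ∃ r : RatFunc K, (r : LaurentSeries K) = f

/-- `f` is a quadratic irrational: it is irrational and a root of a quadratic
polynomial with coefficients in `K[t]`. -/
def IsQuadIrr (f : LaurentSeries K) : Prop :=
  ¬ IsRatLS f ∧ ∃ a b c : Polynomial K, a ≠ 0 ∧
    Polynomial.aeval (tLS K) a * f ^ 2 + Polynomial.aeval (tLS K) b * f +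
      Polynomial.aeval (tLS K) c = 0

/-- `(m, ℓ)` is a window for the periodic part of the continued fraction of `f`:
the partial quotients are periodic with period `ℓ ≥ 1` from index `m + 1` on. -/
def PeriodWindow (f : LaurentSeries K) (m ℓ : ℕ) : Prop :=
  1 ≤ ℓ ∧ ∀ i : ℕ, m + 1 ≤ i → cfPQ f (i + ℓ) = cfPQ f i

/-- The `n`-escape of mass of the continued fraction expansion of `f`: the proportion,
within one period of the periodic part of the partial quotients of `f`, of the sum
`∑ max (deg A_i - n) 0` relative to `∑ deg A_i`. -/
def eMassOf (f : LaurentSeries K) (n : ℕ) : ℝ :=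
  if h : ∃ s : ℕ × ℕ, PeriodWindow f s.1 s.2 then
    (∑ i ∈ Finset.Ico ((Classical.choose h).1 + 1)
        ((Classical.choose h).1 + 1 + (Classical.choose h).2),
        max ((degZ (cfPQ f i) : ℝ) - n) 0) /
    (∑ i ∈ Finset.Ico ((Classical.choose h).1 + 1)
        ((Classical.choose h).1 + 1 + (Classical.choose h).2),
        (degZ (cfPQ f i) : ℝ))
  else 0

/-- The `n`-escape of mass in the `k`-th diagonal of `f` with respect to the
sequence `{g^k}`. -/
def eMassP (g f : LaurentSeries K) (k n : ℕ) : ℝ := eMassOf (g ^ k * f) n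

/-- The `n`-escape of mass in the `k`-th diagonal of `f` with respect to `{t^k}`. -/
def eMass (f : LaurentSeries K) (k n : ℕ) : ℝ := eMassP (tLS K) f k n

/-- `f` exhibits `c` escape of mass with respect to the sequence `{g^k}`. -/
def ExhibitsEscape (g f : LaurentSeries K) (c : ℝ) : Prop :=
  ∃ L : ℝ, Tendsto (fun n : ℕ => Filter.liminf (fun k : ℕ => eMassP g f k n) atTop)
    atTop (nhds L) ∧ c ≤ L

/-- `f` exhibits exactly `c` escape of mass with respect to the sequence `{g^k}`. -/
def ExhibitsExactEscape (g f : LaurentSeries K) (c : ℝ) : Prop :=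
  Tendsto (fun n : ℕ => Filter.liminf (fun k : ℕ => eMassP g f k n) atTop)
    atTop (nhds c)

/-- `f` exhibits full (`c = 1`) maximal escape of mass with respect to `{g^k}`. -/
def ExhibitsFullMaxEscape (g f : LaurentSeries K) : Prop :=
  Tendsto (fun n : ℕ => Filter.limsup (fun k : ℕ => eMassP g f k n) atTop)
    atTop (nhds 1)

/-- `A ⊆ ℕ` has natural density `c`. -/
def HasDensity (A : Set ℕ) (c : ℝ) : Prop :=
  Tendsto (fun M : ℕ => (((Finset.Icc 1 M).filter fun k => k ∈ A).card : ℝ) / M)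
    atTop (nhds c)

/-- `f` exhibits full generic escape of mass with respect to `{t^k}`. -/
def FullGenericEscape (f : LaurentSeries K) : Prop :=
  ∀ ε : ℝ, 0 < ε → ∃ dens : ℕ → ℝ,
    (∀ n : ℕ, HasDensity {k : ℕ | 1 - ε < eMass f k n} (dens n)) ∧
    Tendsto dens atTop (nhds 1)

/-- Substitution `t ↦ P(t)` on Laurent series: for `f = ∑_{i ≥ d} a_i t^{-i}` (with
`d = f.order` in the variable `X = t⁻¹`), `substLS f P = ∑_{i ≥ d} a_i P(t)^{-i}`. -/
def substLS (f : LaurentSeries K) (P : Polynomial K) : LaurentSeries K :=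
  (Polynomial.aeval (tLS K) P)⁻¹ ^ f.order *
    HahnSeries.ofPowerSeries ℤ K
      (PowerSeries.mk fun n =>
        ∑ j ∈ Finset.range (n + 1),
          f.coeff (f.order + j) * (((Polynomial.aeval (tLS K) P)⁻¹ ^ j).coeff (n : ℤ)))

/-- The `p`-Cantor sequence over `ZMod p`. -/
def cantor (p : ℕ) : ℕ → ZMod p
  | 0 => 1
  | (n + 1) =>
    if hp : 1 < p then
      if (n + 1) % p % 2 = 1 then 0
      else (((p - 1) / 2).choose (((n + 1) % p) / 2) : ZMod p) * cantor p ((n + 1) / p)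
    else 0
  decreasing_by exact Nat.div_lt_self (Nat.succ_pos _) hp

/-- `Θ̃_p = ∑_{i ≥ 0} c_i^{(p)} t^{-i}`. -/
def cantorTilde (p : ℕ) : LaurentSeries (ZMod p) :=
  HahnSeries.ofPowerSeries ℤ (ZMod p) (PowerSeries.mk fun i => cantor p i)

/-- `Θ_p = t⁻¹ ∑_{i ≥ 0} c_i^{(p)} t^{-i}`. -/
def cantorTheta (p : ℕ) : LaurentSeries (ZMod p) :=
  HahnSeries.single (1 : ℤ) 1 * cantorTilde p

/-- The Thue–Morse sequence over `ZMod 2`. -/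
def thueMorse (n : ℕ) : ZMod 2 := ((Nat.digits 2 n).sum : ZMod 2)

/-- The Thue–Morse Laurent series `τ = ∑_{n ≥ 1} τ_n t^{-n}`. -/
def tmSeries : LaurentSeries (ZMod 2) :=
  HahnSeries.ofPowerSeries ℤ (ZMod 2) (PowerSeries.mk fun n => thueMorse n)

/-- The extension of a one-sided sequence to `ℤ` by zero. -/
def extendSeq (S : ℕ → K) : ℤ → K := fun i => if 0 ≤ i then S i.toNat else 0

/-- The entry `W(S)[m, n]` of the number wall of the (doubly infinite) sequence `s`:
the determinant of the `(m+1) × (m+1)` Toeplitz matrix `(s_{n - i + j})`. -/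
def wallEntry (s : ℤ → K) (m : ℕ) (n : ℤ) : K :=
  (Matrix.of fun i j : Fin (m + 1) => s (n - (i : ℕ) + (j : ℕ))).det

/-- The Laurent series `t⁻¹ ∑_{i ≥ 0} s_i t^{-i}` associated to a sequence. -/
def seriesOf (S : ℕ → K) : LaurentSeries K :=
  HahnSeries.single (1 : ℤ) 1 * HahnSeries.ofPowerSeries ℤ K (PowerSeries.mk S)

/-- The coefficient sequence of `Θ = t⁻¹ ∑ s_i t^{-i}`, extended to `ℤ` by zero. -/
def coeffSeq (f : LaurentSeries K) : ℤ → K := fun i => if 0 ≤ i then f.coeff (i + 1) else 0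

/-- The absolute value of a Laurent series in `F_q((t⁻¹))`: `|f| = q^{deg f}`. -/
def absLS {K : Type*} [Field K] [Fintype K] (f : LaurentSeries K) : ℝ :=
  if f = 0 then 0 else (Fintype.card K : ℝ) ^ (-f.order)


/-! ### Auxiliary development for Statement 8 -/

section Aux

variable {F : Type} [Field F]

/-- The evaluation of polynomials at `t`. -/
abbrev phiP : Polynomial F →ₐ[F] LaurentSeries F := Polynomial.aeval (tLS F)

lemma tLS_pow (j : ℕ) : (tLS F) ^ j = HahnSeries.single (-(j : ℤ)) 1 := by
  rw [tLS, HahnSeries.single_pow, one_pow]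
  congr 1
  simp

lemma tLS_ne_zero : (tLS F) ≠ 0 := HahnSeries.single_ne_zero one_ne_zero

lemma algebraMap_LS (c : F) : algebraMap F (LaurentSeries F) c = HahnSeries.C c := by
  rw [HahnSeries.algebraMap_apply',
    show (algebraMap F (PowerSeries F)) c = PowerSeries.C c from rfl,
    HahnSeries.ofPowerSeries_C]

lemma coeff_phiP (P : Polynomial F) (n : ℤ) :
    (phiP P).coeff n = if n ≤ 0 then P.coeff (-n).toNat else 0 := by
  classical
  rw [show phiP (F := F) P = Polynomial.eval₂ (algebraMap F (LaurentSeries F)) (tLS F) P from rfl,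
    Polynomial.eval₂_eq_sum_range]
  refine Eq.trans (map_sum (HahnSeries.coeff.addMonoidHom n) _ _) ?_
  simp only [HahnSeries.coeff.addMonoidHom_apply]
  have hterm : ∀ i : ℕ, ((algebraMap F (LaurentSeries F) (P.coeff i)) * (tLS F) ^ i).coeff n
      = if (i : ℤ) = -n then P.coeff i else 0 := by
    intro i
    rw [algebraMap_LS, tLS_pow, HahnSeries.C_apply, HahnSeries.single_mul_single, zero_add,
      mul_one, HahnSeries.coeff_single]
    by_cases h : (i : ℤ) = -n
    · rw [if_pos h, if_pos (by omega)]
    · rw [if_neg h, if_neg (by omega)]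
  rw [Finset.sum_congr rfl (fun i _ => hterm i)]
  by_cases hn : n ≤ 0
  · rw [if_pos hn]
    have hcond : ∀ i : ℕ, ((i : ℤ) = -n) ↔ i = (-n).toNat := by intro i; omega
    simp only [hcond]
    rw [Finset.sum_ite_eq' (Finset.range (P.natDegree + 1))]
    by_cases hmem : (-n).toNat ∈ Finset.range (P.natDegree + 1)
    · rw [if_pos hmem]
    · rw [if_neg hmem]
      refine (Polynomial.coeff_eq_zero_of_natDegree_lt ?_).symm
      simp only [Finset.mem_range] at hmem
      omega
  · rw [if_neg hn]
    apply Finset.sum_eq_zero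
    intro i _
    rw [if_neg (by omega)]

lemma phiP_coeff_pos (P : Polynomial F) {n : ℤ} (h : 0 < n) : (phiP P).coeff n = 0 := by
  rw [coeff_phiP, if_neg (by omega)]

lemma phiP_coeff_nonpos (P : Polynomial F) {n : ℤ} (h : n ≤ 0) :
    (phiP P).coeff n = P.coeff (-n).toNat := by
  rw [coeff_phiP, if_pos h]

lemma order_eq_of_forall {x : LaurentSeries F} {n : ℤ} (h0 : x.coeff n ≠ 0)
    (h : ∀ m < n, x.coeff m = 0) : x.order = n := by
  have hx : x ≠ 0 := HahnSeries.ne_zero_of_coeff_ne_zero h0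
  rcases lt_or_eq_of_le (HahnSeries.order_le_of_coeff_ne_zero h0) with h2 | h2
  · exact absurd (h _ h2) ((mt HahnSeries.coeff_order_eq_zero.mp hx))
  · exact h2

lemma phiP_ne_zero {P : Polynomial F} (hP : P ≠ 0) : phiP P ≠ 0 := by
  apply HahnSeries.ne_zero_of_coeff_ne_zero (g := -(P.natDegree : ℤ))
  rw [phiP_coeff_nonpos _ (by omega)]
  simpa using Polynomial.leadingCoeff_ne_zero.mpr hP

lemma order_phiP {P : Polynomial F} (hP : P ≠ 0) : (phiP P).order = -(P.natDegree : ℤ) := by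
  apply order_eq_of_forall
  · rw [phiP_coeff_nonpos _ (by omega)]
    simpa using Polynomial.leadingCoeff_ne_zero.mpr hP
  · intro m hm
    rw [coeff_phiP]
    by_cases h : m ≤ 0
    · rw [if_pos h]
      exact Polynomial.coeff_eq_zero_of_natDegree_lt (by omega)
    · rw [if_neg h]

lemma degZ_phiP {P : Polynomial F} (hP : P ≠ 0) : degZ (phiP P) = (P.natDegree : ℤ) := by
  rw [degZ, order_phiP hP, neg_neg]

lemma order_inv' {f : LaurentSeries F} (hf : f ≠ 0) : (f⁻¹).order = -f.order := by
  have h2 := HahnSeries.order_mul hf (inv_ne_zero hf)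
  rw [mul_inv_cancel₀ hf, HahnSeries.order_one] at h2
  omega

lemma order_add_left {x y : LaurentSeries F} (hx : x ≠ 0)
    (h : y = 0 ∨ x.order < y.order) : (x + y).order = x.order := by
  rcases h with rfl | h
  · rw [add_zero]
  · apply order_eq_of_forall
    · rw [HahnSeries.coeff_add, HahnSeries.coeff_eq_zero_of_lt_order h, add_zero]
      exact mt HahnSeries.coeff_order_eq_zero.mp hx
    · intro p hp
      rw [HahnSeries.coeff_add, HahnSeries.coeff_eq_zero_of_lt_order hp,
        HahnSeries.coeff_eq_zero_of_lt_order (hp.trans h), add_zero]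

/-! #### Rationality closure -/

lemma isRatLS_zero : IsRatLS (0 : LaurentSeries F) := ⟨0, by push_cast; rfl⟩

lemma isRatLS_one : IsRatLS (1 : LaurentSeries F) := ⟨1, by push_cast; rfl⟩

lemma isRatLS_add {x y : LaurentSeries F} (hx : IsRatLS x) (hy : IsRatLS y) :
    IsRatLS (x + y) := by
  obtain ⟨r, hr⟩ := hx; obtain ⟨s, hs⟩ := hy
  exact ⟨r + s, by rw [map_add, hr, hs]⟩

lemma isRatLS_mul {x y : LaurentSeries F} (hx : IsRatLS x) (hy : IsRatLS y) :
    IsRatLS (x * y) := by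
  obtain ⟨r, hr⟩ := hx; obtain ⟨s, hs⟩ := hy
  exact ⟨r * s, by rw [map_mul, hr, hs]⟩

lemma isRatLS_neg {x : LaurentSeries F} (hx : IsRatLS x) : IsRatLS (-x) := by
  obtain ⟨r, hr⟩ := hx
  exact ⟨-r, by rw [map_neg, hr]⟩

lemma isRatLS_sub {x y : LaurentSeries F} (hx : IsRatLS x) (hy : IsRatLS y) :
    IsRatLS (x - y) := by
  rw [sub_eq_add_neg]; exact isRatLS_add hx (isRatLS_neg hy)

lemma isRatLS_inv {x : LaurentSeries F} (hx : IsRatLS x) : IsRatLS x⁻¹ := by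
  obtain ⟨r, hr⟩ := hx
  refine ⟨1 / r, ?_⟩
  rw [map_div₀, map_one, hr, one_div]

lemma isRatLS_tLS : IsRatLS (tLS F) := by
  refine ⟨1 / RatFunc.X, ?_⟩
  rw [map_div₀, map_one, RatFunc.coe_X, one_div]
  apply inv_eq_of_mul_eq_one_left
  rw [tLS, HahnSeries.single_mul_single, one_mul]
  norm_num

lemma isRatLS_C (c : F) : IsRatLS (HahnSeries.C c : LaurentSeries F) :=
  ⟨((Polynomial.C c : Polynomial F) : RatFunc F), by
    rw [← RatFunc.coe_coe, Polynomial.coe_C, PowerSeries.coe_C]⟩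

lemma isRatLS_pow {x : LaurentSeries F} (hx : IsRatLS x) (n : ℕ) : IsRatLS (x ^ n) := by
  induction n with
  | zero => simpa using isRatLS_one
  | succ n ih => rw [pow_succ]; exact isRatLS_mul ih hx

lemma isRatLS_algebraMap (c : F) : IsRatLS (algebraMap F (LaurentSeries F) c) := by
  rw [algebraMap_LS]
  exact isRatLS_C c

lemma isRatLS_phiP (P : Polynomial F) : IsRatLS (phiP P) := by
  induction P using Polynomial.induction_on with
  | C c => rw [Polynomial.aeval_C]; exact isRatLS_algebraMap c
  | add p q hp hq => rw [map_add]; exact isRatLS_add hp hq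
  | monomial n c _ =>
      rw [map_mul, map_pow, Polynomial.aeval_C, Polynomial.aeval_X]
      exact isRatLS_mul (isRatLS_algebraMap c) (isRatLS_pow isRatLS_tLS _)

/-! #### `polyPart`, `fracPart` -/

lemma polyPart_coeff (f : LaurentSeries F) (n : ℤ) :
    (polyPart f).coeff n = if n ≤ 0 then f.coeff n else 0 := rfl

lemma fracPart_coeff (f : LaurentSeries F) (n : ℤ) :
    (fracPart f).coeff n = if n ≤ 0 then 0 else f.coeff n := by
  rw [fracPart, HahnSeries.coeff_sub, polyPart_coeff]
  by_cases h : n ≤ 0 <;> simp [h]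

/-- An explicit polynomial representing the polynomial part. -/
def ptp (f : LaurentSeries F) : Polynomial F :=
  ∑ j ∈ Finset.range ((-f.order).toNat + 1), Polynomial.C (f.coeff (-(j : ℤ))) * Polynomial.X ^ j

lemma ptp_coeff (f : LaurentSeries F) (j : ℕ) :
    (ptp f).coeff j = if j < (-f.order).toNat + 1 then f.coeff (-(j : ℤ)) else 0 := by
  classical
  rw [ptp, Polynomial.finset_sum_coeff]
  have : ∀ i ∈ Finset.range ((-f.order).toNat + 1),
      (Polynomial.C (f.coeff (-(i : ℤ))) * Polynomial.X ^ i).coeff j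
        = if i = j then f.coeff (-(i : ℤ)) else 0 := by
    intro i _
    rw [Polynomial.coeff_C_mul, Polynomial.coeff_X_pow]
    by_cases h : j = i
    · rw [if_pos h, if_pos h.symm, mul_one]
    · rw [if_neg h, if_neg (Ne.symm h), mul_zero]
  rw [Finset.sum_congr rfl this, Finset.sum_ite_eq' (Finset.range ((-f.order).toNat + 1))]
  by_cases hmem : j ∈ Finset.range ((-f.order).toNat + 1)
  · rw [if_pos hmem, if_pos (Finset.mem_range.mp hmem)]
  · rw [if_neg hmem, if_neg (fun h => hmem (Finset.mem_range.mpr h))]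

lemma phiP_ptp (f : LaurentSeries F) : phiP (ptp f) = polyPart f := by
  ext n
  rw [coeff_phiP, polyPart_coeff]
  by_cases hn : n ≤ 0
  · rw [if_pos hn, if_pos hn, ptp_coeff]
    have hnn : (-((-n).toNat : ℤ)) = n := by omega
    by_cases h : (-n).toNat < (-f.order).toNat + 1
    · rw [if_pos h, hnn]
    · rw [if_neg h]
      symm
      apply HahnSeries.coeff_eq_zero_of_lt_order
      omega
  · rw [if_neg hn, if_neg hn]

lemma isRatLS_polyPart (f : LaurentSeries F) : IsRatLS (polyPart f) := by
  rw [← phiP_ptp]; exact isRatLS_phiP _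

/-! #### Continued fraction machinery -/

lemma cfQuot_succ (f : LaurentSeries F) (i : ℕ) :
    cfQuot f (i + 1) = (fracPart (cfQuot f i))⁻¹ := rfl

lemma not_isRatLS_cfQuot {f : LaurentSeries F} (hf : ¬ IsRatLS f) :
    ∀ i, ¬ IsRatLS (cfQuot f i) := by
  intro i
  induction i with
  | zero => exact hf
  | succ i ih =>
    intro hrat
    apply ih
    have h1 : IsRatLS (fracPart (cfQuot f i)) := by
      rw [show fracPart (cfQuot f i) = ((fracPart (cfQuot f i))⁻¹)⁻¹ from (inv_inv _).symm,
        ← cfQuot_succ]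
      exact isRatLS_inv hrat
    have h2 : cfQuot f i = polyPart (cfQuot f i) + fracPart (cfQuot f i) := by
      unfold fracPart; ring
    rw [h2]
    exact isRatLS_add (isRatLS_polyPart _) h1

lemma cfQuot_ne_zero {f : LaurentSeries F} (hf : ¬ IsRatLS f) (i : ℕ) : cfQuot f i ≠ 0 :=
  fun h => (not_isRatLS_cfQuot hf i) (h ▸ isRatLS_zero)

lemma fracPart_cfQuot_ne_zero {f : LaurentSeries F} (hf : ¬ IsRatLS f) (i : ℕ) :
    fracPart (cfQuot f i) ≠ 0 := by
  intro h
  apply not_isRatLS_cfQuot hf i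
  have h2 : cfQuot f i = polyPart (cfQuot f i) :=
    sub_eq_zero.mp (show cfQuot f i - polyPart (cfQuot f i) = 0 from h)
  rw [h2]; exact isRatLS_polyPart _

lemma order_fracPart_pos {g : LaurentSeries F} (hg : fracPart g ≠ 0) :
    1 ≤ (fracPart g).order := by
  by_contra h
  push_neg at h
  have h2 := mt HahnSeries.coeff_order_eq_zero.mp hg
  rw [fracPart_coeff, if_pos (by omega)] at h2
  exact h2 rfl

lemma order_cfQuot_neg {f : LaurentSeries F} (hf : ¬ IsRatLS f) (i : ℕ) :
    (cfQuot f (i+1)).order ≤ -1 := by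
  rw [cfQuot_succ, show (fracPart (cfQuot f i))⁻¹ = (fracPart (cfQuot f i))⁻¹ from rfl,
    order_inv' (fracPart_cfQuot_ne_zero hf i)]
  have := order_fracPart_pos (fracPart_cfQuot_ne_zero hf i)
  omega

lemma polyPart_order {g : LaurentSeries F} (hg : g ≠ 0) (h : g.order < 0) :
    polyPart g ≠ 0 ∧ (polyPart g).order = g.order := by
  have h0 : (polyPart g).coeff g.order ≠ 0 := by
    rw [polyPart_coeff, if_pos (by omega)]; exact mt HahnSeries.coeff_order_eq_zero.mp hg
  refine ⟨HahnSeries.ne_zero_of_coeff_ne_zero h0, order_eq_of_forall h0 ?_⟩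
  intro m hm
  rw [polyPart_coeff]
  by_cases hm0 : m ≤ 0
  · rw [if_pos hm0]; exact HahnSeries.coeff_eq_zero_of_lt_order hm
  · rw [if_neg hm0]

/-- The partial quotients, as polynomials. -/
def AA (f : LaurentSeries F) (i : ℕ) : Polynomial F := ptp (cfQuot f i)

lemma cfPQ_eq_phiP (f : LaurentSeries F) (i : ℕ) : cfPQ f i = phiP (AA f i) := by
  rw [cfPQ, AA, phiP_ptp]

lemma AA_ne_zero {f : LaurentSeries F} (hf : ¬ IsRatLS f) (i : ℕ) :
    AA f (i+1) ≠ 0 ∧ ((AA f (i+1)).natDegree : ℤ) = -(cfQuot f (i+1)).order := by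
  have hq := cfQuot_ne_zero hf (i+1)
  have hneg := order_cfQuot_neg hf i
  obtain ⟨hne, hord⟩ := polyPart_order hq (by omega)
  have hphi : phiP (AA f (i+1)) = polyPart (cfQuot f (i+1)) := phiP_ptp _
  have hAne : AA f (i+1) ≠ 0 := by
    intro h; rw [h, map_zero] at hphi; exact hne hphi.symm
  refine ⟨hAne, ?_⟩
  have h3 := order_phiP hAne
  rw [hphi, hord] at h3
  omega

lemma degZ_cfPQ {f : LaurentSeries F} (hf : ¬ IsRatLS f) (i : ℕ) :
    degZ (cfPQ f (i+1)) = ((AA f (i+1)).natDegree : ℤ) ∧ 1 ≤ (AA f (i+1)).natDegree := by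
  obtain ⟨hAne, hdeg⟩ := AA_ne_zero hf i
  have h1 : degZ (cfPQ f (i+1)) = ((AA f (i+1)).natDegree : ℤ) := by
    rw [cfPQ_eq_phiP, degZ_phiP hAne]
  have h2 := order_cfQuot_neg hf i
  exact ⟨h1, by omega⟩

lemma cfQuot_eq (f : LaurentSeries F) (i : ℕ) :
    cfQuot f i = phiP (AA f i) + (cfQuot f (i+1))⁻¹ := by
  rw [cfQuot_succ, inv_inv, AA, phiP_ptp]
  unfold fracPart; ring

lemma cfQuot_mul_succ {f : LaurentSeries F} (hf : ¬ IsRatLS f) (i : ℕ) :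
    cfQuot f i * cfQuot f (i+1) = phiP (AA f i) * cfQuot f (i+1) + 1 := by
  rw [cfQuot_eq f i, add_mul, inv_mul_cancel₀ (cfQuot_ne_zero hf (i+1))]

/-- Denominators of the convergents (index shifted by one). -/
def Qd (f : LaurentSeries F) : ℕ → Polynomial F
  | 0 => 0
  | 1 => 1
  | (j+2) => AA f (j+1) * Qd f (j+1) + Qd f j

/-- Numerators of the convergents (index shifted by one). -/
def Pd (f : LaurentSeries F) : ℕ → Polynomial F
  | 0 => 1
  | 1 => AA f 0
  | (j+2) => AA f (j+1) * Pd f (j+1) + Pd f j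

lemma Pd_Qd_det (f : LaurentSeries F) (j : ℕ) :
    Pd f (j+1) * Qd f j - Pd f j * Qd f (j+1) = (-1 : Polynomial F)^(j+1) := by
  induction j with
  | zero => simp [Pd, Qd]
  | succ j ih =>
    show Pd f (j+2) * Qd f (j+1) - Pd f (j+1) * Qd f (j+2) = _
    rw [show Pd f (j+2) = AA f (j+1) * Pd f (j+1) + Pd f j from rfl,
        show Qd f (j+2) = AA f (j+1) * Qd f (j+1) + Qd f j from rfl]
    linear_combination (-1 : Polynomial F) * ih

lemma I1 {f : LaurentSeries F} (hf : ¬ IsRatLS f) (j : ℕ) :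
    cfQuot f 0 * (cfQuot f (j+1) * phiP (Qd f (j+1)) + phiP (Qd f j)) =
      cfQuot f (j+1) * phiP (Pd f (j+1)) + phiP (Pd f j) := by
  induction j with
  | zero =>
    simp only [Qd, Pd, map_one, map_zero, mul_one, mul_zero, add_zero, zero_add]
    linear_combination cfQuot_mul_succ hf 0
  | succ j ih =>
    have hstep := cfQuot_mul_succ hf (j+1)
    have hQ : phiP (Qd f (j+2)) = phiP (AA f (j+1)) * phiP (Qd f (j+1)) + phiP (Qd f j) := by
      rw [show Qd f (j+2) = AA f (j+1) * Qd f (j+1) + Qd f j from rfl, map_add, map_mul]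
    have hP : phiP (Pd f (j+2)) = phiP (AA f (j+1)) * phiP (Pd f (j+1)) + phiP (Pd f j) := by
      rw [show Pd f (j+2) = AA f (j+1) * Pd f (j+1) + Pd f j from rfl, map_add, map_mul]
    rw [hQ, hP]
    linear_combination cfQuot f (j+2) * ih +
      (phiP (Pd f (j+1)) - cfQuot f 0 * phiP (Qd f (j+1))) * hstep

/-- `q_j Θ - p_j`. -/
def Rr (f : LaurentSeries F) (j : ℕ) : LaurentSeries F :=
  cfQuot f 0 * phiP (Qd f j) - phiP (Pd f j)

lemma Rr_mul {f : LaurentSeries F} (hf : ¬ IsRatLS f) (j : ℕ) :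
    Rr f (j+1) * (cfQuot f (j+1) * phiP (Qd f (j+1)) + phiP (Qd f j))
      = (-1 : LaurentSeries F)^j := by
  have h1 := I1 hf j
  have h2 : phiP (Pd f (j+1)) * phiP (Qd f j) - phiP (Pd f j) * phiP (Qd f (j+1))
      = (-1 : LaurentSeries F)^(j+1) := by
    have h3 := congrArg phiP (Pd_Qd_det f j)
    simpa only [map_sub, map_mul, map_pow, map_neg, map_one] using h3
  rw [Rr]
  linear_combination phiP (Qd f (j+1)) * h1 - h2

lemma order_neg_one_pow (j : ℕ) :
    ((-1 : LaurentSeries F)^j).order = 0 ∧ ((-1 : LaurentSeries F)^j) ≠ 0 := by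
  have hsq : ((-1 : LaurentSeries F)^j) * ((-1 : LaurentSeries F)^j) = 1 := by
    rw [← mul_pow]; norm_num
  have hne : ((-1 : LaurentSeries F)^j) ≠ 0 := by
    intro h; rw [h, zero_mul] at hsq; exact zero_ne_one hsq
  refine ⟨?_, hne⟩
  have h2 := HahnSeries.order_mul hne hne
  rw [hsq, HahnSeries.order_one] at h2
  omega

lemma Qd_spec {f : LaurentSeries F} (hf : ¬ IsRatLS f) : ∀ j : ℕ, Qd f (j+1) ≠ 0 ∧
    ((Qd f (j+1)).natDegree : ℤ) = ∑ i ∈ Finset.Icc 1 j, degZ (cfPQ f i) ∧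
    (Qd f j).degree < (Qd f (j+1)).degree := by
  intro j
  induction j with
  | zero =>
    refine ⟨one_ne_zero, by simp [Qd], ?_⟩
    show (Qd f 0).degree < (Qd f 1).degree
    rw [show Qd f 0 = 0 from rfl, show Qd f 1 = 1 from rfl, Polynomial.degree_zero,
      Polynomial.degree_one]
    exact WithBot.bot_lt_coe 0
  | succ j ih =>
    obtain ⟨hne, hdeg, hlt⟩ := ih
    obtain ⟨hdz, hA1⟩ := degZ_cfPQ hf j
    have hAne : AA f (j+1) ≠ 0 := (AA_ne_zero hf j).1
    have hdegA : 0 < (AA f (j+1)).degree := by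
      rw [Polynomial.degree_eq_natDegree hAne]
      exact_mod_cast Nat.pos_of_ne_zero (by omega)
    have hlt2 : (Qd f j).degree < (AA f (j+1) * Qd f (j+1)).degree := by
      rw [Polynomial.degree_mul]
      calc (Qd f j).degree < (Qd f (j+1)).degree := hlt
        _ = 0 + (Qd f (j+1)).degree := by rw [zero_add]
        _ ≤ (AA f (j+1)).degree + (Qd f (j+1)).degree :=
            add_le_add_left hdegA.le _
    have hQ2 : Qd f (j+2) = AA f (j+1) * Qd f (j+1) + Qd f j := rfl
    have hdeg2 : (Qd f (j+2)).degree = (AA f (j+1) * Qd f (j+1)).degree := by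
      rw [hQ2, add_comm (AA f (j+1) * Qd f (j+1)) (Qd f j)]
      exact Polynomial.degree_add_eq_right_of_degree_lt hlt2
    have hmulne : AA f (j+1) * Qd f (j+1) ≠ 0 := mul_ne_zero hAne hne
    have hne2 : Qd f (j+2) ≠ 0 := by
      intro h
      rw [h, Polynomial.degree_zero] at hdeg2
      exact hmulne (Polynomial.degree_eq_bot.mp hdeg2.symm)
    have hnd : (Qd f (j+2)).natDegree = (AA f (j+1)).natDegree + (Qd f (j+1)).natDegree := by
      rw [Polynomial.natDegree_eq_of_degree_eq hdeg2, Polynomial.natDegree_mul hAne hne]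
    refine ⟨hne2, ?_, ?_⟩
    · rw [Finset.sum_Icc_succ_top (by omega : 1 ≤ j + 1), ← hdeg, hnd, hdz]
      push_cast; ring
    · rw [hdeg2, Polynomial.degree_mul]
      calc (Qd f (j+1)).degree = 0 + (Qd f (j+1)).degree := by rw [zero_add]
        _ < (AA f (j+1)).degree + (Qd f (j+1)).degree :=
            WithBot.add_lt_add_right (Polynomial.degree_ne_bot.mpr hne) hdegA

lemma Qd_natDegree_succ {f : LaurentSeries F} (hf : ¬ IsRatLS f) (j : ℕ) :
    (Qd f (j+2)).natDegree = (AA f (j+1)).natDegree + (Qd f (j+1)).natDegree := by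
  obtain ⟨hne, _, hlt⟩ := Qd_spec hf j
  have hAne : AA f (j+1) ≠ 0 := (AA_ne_zero hf j).1
  have hdegA : 0 < (AA f (j+1)).degree := by
    rw [Polynomial.degree_eq_natDegree hAne]
    exact_mod_cast Nat.pos_of_ne_zero (by have := (degZ_cfPQ hf j).2; omega)
  have hlt2 : (Qd f j).degree < (AA f (j+1) * Qd f (j+1)).degree := by
    rw [Polynomial.degree_mul]
    calc (Qd f j).degree < (Qd f (j+1)).degree := hlt
      _ = 0 + (Qd f (j+1)).degree := by rw [zero_add]
      _ ≤ (AA f (j+1)).degree + (Qd f (j+1)).degree := add_le_add_left hdegA.le _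
  have hdeg2 : (Qd f (j+2)).degree = (AA f (j+1) * Qd f (j+1)).degree := by
    rw [show Qd f (j+2) = AA f (j+1) * Qd f (j+1) + Qd f j from rfl,
      add_comm (AA f (j+1) * Qd f (j+1)) (Qd f j)]
    exact Polynomial.degree_add_eq_right_of_degree_lt hlt2
  rw [Polynomial.natDegree_eq_of_degree_eq hdeg2, Polynomial.natDegree_mul hAne hne]

lemma Qd_natDegree_mono {f : LaurentSeries F} (hf : ¬ IsRatLS f) (j : ℕ) :
    (Qd f j).natDegree ≤ (Qd f (j+1)).natDegree := by
  cases j with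
  | zero => simp [Qd]
  | succ j =>
    rw [Qd_natDegree_succ hf j]
    omega

lemma Qd_natDegree_lt {f : LaurentSeries F} (hf : ¬ IsRatLS f) (j : ℕ) :
    (Qd f (j+1)).natDegree < (Qd f (j+2)).natDegree := by
  rw [Qd_natDegree_succ hf j]
  have := (degZ_cfPQ hf j).2
  omega

lemma le_Qd_natDegree {f : LaurentSeries F} (hf : ¬ IsRatLS f) (j : ℕ) :
    j ≤ (Qd f (j+1)).natDegree := by
  induction j with
  | zero => omega
  | succ j ih =>
    show j + 1 ≤ (Qd f (j+2)).natDegree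
    have := Qd_natDegree_lt hf j; omega

lemma order_Rr {f : LaurentSeries F} (hf : ¬ IsRatLS f) :
    ∀ j, Rr f j ≠ 0 ∧ (Rr f j).order = ((Qd f (j+1)).natDegree : ℤ) := by
  intro j
  cases j with
  | zero =>
    have h0 : Rr f 0 = -1 := by
      rw [Rr, show Qd f 0 = 0 from rfl, show Pd f 0 = 1 from rfl, map_zero, map_one,
        mul_zero, zero_sub]
    rw [h0, show Qd f 1 = 1 from rfl]
    refine ⟨neg_ne_zero.mpr one_ne_zero, ?_⟩
    rw [HahnSeries.order_neg, HahnSeries.order_one, Polynomial.natDegree_one]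
    rfl
  | succ j =>
    have hmul := Rr_mul hf j
    have hpow := order_neg_one_pow (F := F) j
    have hprod_ne : Rr f (j+1) * (cfQuot f (j+1) * phiP (Qd f (j+1)) + phiP (Qd f j)) ≠ 0 := by
      rw [hmul]; exact hpow.2
    have hRne : Rr f (j+1) ≠ 0 := left_ne_zero_of_mul hprod_ne
    have hDne : cfQuot f (j+1) * phiP (Qd f (j+1)) + phiP (Qd f j) ≠ 0 :=
      right_ne_zero_of_mul hprod_ne
    have hQne : Qd f (j+1) ≠ 0 := (Qd_spec hf j).1
    have hx : cfQuot f (j+1) * phiP (Qd f (j+1)) ≠ 0 :=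
      mul_ne_zero (cfQuot_ne_zero hf _) (phiP_ne_zero hQne)
    have hordx : (cfQuot f (j+1) * phiP (Qd f (j+1))).order
        = -((Qd f (j+2)).natDegree : ℤ) := by
      rw [HahnSeries.order_mul (cfQuot_ne_zero hf _) (phiP_ne_zero hQne), order_phiP hQne,
        Qd_natDegree_succ hf j]
      have h4 := (AA_ne_zero hf j).2
      push_cast
      omega
    have hordD : (cfQuot f (j+1) * phiP (Qd f (j+1)) + phiP (Qd f j)).order
        = -((Qd f (j+2)).natDegree : ℤ) := by
      rw [order_add_left hx ?_, hordx]
      by_cases h0 : Qd f j = 0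
      · left; rw [h0, map_zero]
      · right
        rw [hordx, order_phiP h0]
        have h5 : (Qd f j).natDegree < (Qd f (j+1)).natDegree :=
          Polynomial.natDegree_lt_natDegree h0 (Qd_spec hf j).2.2
        have h6 := Qd_natDegree_lt hf j
        omega
    have h7 : (Rr f (j+1)).order
        + (cfQuot f (j+1) * phiP (Qd f (j+1)) + phiP (Qd f j)).order = 0 := by
      rw [← HahnSeries.order_mul hRne hDne, hmul, hpow.1]
    refine ⟨hRne, ?_⟩
    show (Rr f (j+1)).order = ((Qd f (j+2)).natDegree : ℤ)
    rw [hordD] at h7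
    omega

lemma best_approx {f : LaurentSeries F} (hf : ¬ IsRatLS f) (j : ℕ) (q p : Polynomial F)
    (hq : q ≠ 0)
    (h : ((Qd f (j+1)).natDegree : ℤ) < (cfQuot f 0 * phiP q - phiP p).order) :
    (Qd f (j+1)).natDegree ≤ q.natDegree := by
  set ε : Polynomial F := (-1 : Polynomial F)^(j+1) with hε_def
  have hε2 : ε * ε = 1 := by rw [hε_def, ← mul_pow]; norm_num
  set a : Polynomial F := ε * (Qd f j * p - Pd f j * q) with ha_def
  set b : Polynomial F := ε * (Pd f (j+1) * q - Qd f (j+1) * p) with hb_def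
  have hI2 := Pd_Qd_det f j
  have haq : a * Qd f (j+1) + b * Qd f j = q := by
    rw [ha_def, hb_def, hε_def]
    linear_combination ((-1 : Polynomial F)^(j+1) * q) * hI2
      + q * (by rw [← mul_pow]; norm_num :
          ((-1 : Polynomial F)^(j+1)) * ((-1 : Polynomial F)^(j+1)) = 1)
  have hap : a * Pd f (j+1) + b * Pd f j = p := by
    rw [ha_def, hb_def, hε_def]
    linear_combination ((-1 : Polynomial F)^(j+1) * p) * hI2
      + p * (by rw [← mul_pow]; norm_num :
          ((-1 : Polynomial F)^(j+1)) * ((-1 : Polynomial F)^(j+1)) = 1)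
  have hdecomp : cfQuot f 0 * phiP q - phiP p = phiP a * Rr f (j+1) + phiP b * Rr f j := by
    have h1 : phiP a * phiP (Qd f (j+1)) + phiP b * phiP (Qd f j) = phiP q := by
      rw [← map_mul, ← map_mul, ← map_add, haq]
    have h2 : phiP a * phiP (Pd f (j+1)) + phiP b * phiP (Pd f j) = phiP p := by
      rw [← map_mul, ← map_mul, ← map_add, hap]
    rw [Rr, Rr]
    linear_combination (cfQuot f 0) * h1.symm - h2.symm
  obtain ⟨hR1ne, hR1ord⟩ := order_Rr hf (j+1)
  obtain ⟨hR0ne, hR0ord⟩ := order_Rr hf j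
  by_cases hb0 : b = 0
  · -- q = a * Qd f (j+1)
    have ha0 : a ≠ 0 := by
      intro h0
      rw [h0, hb0, zero_mul, zero_mul, add_zero] at haq
      exact hq haq.symm
    rw [hb0, zero_mul, add_zero] at haq
    rw [← haq, Polynomial.natDegree_mul ha0 (Qd_spec hf j).1]
    omega
  by_cases ha0 : a = 0
  · -- difference = phiP b * Rr f j
    rw [ha0, map_zero, zero_mul, zero_add] at hdecomp
    have hord : (cfQuot f 0 * phiP q - phiP p).order
        = -((b.natDegree : ℤ)) + ((Qd f (j+1)).natDegree : ℤ) := by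
      rw [hdecomp, HahnSeries.order_mul (phiP_ne_zero hb0) hR0ne, order_phiP hb0, hR0ord]
    omega
  -- both nonzero
  have ho1 : (phiP a * Rr f (j+1)).order
      = -((a.natDegree : ℤ)) + ((Qd f (j+2)).natDegree : ℤ) := by
    rw [HahnSeries.order_mul (phiP_ne_zero ha0) hR1ne, order_phiP ha0, hR1ord]
  have ho2 : (phiP b * Rr f j).order
      = -((b.natDegree : ℤ)) + ((Qd f (j+1)).natDegree : ℤ) := by
    rw [HahnSeries.order_mul (phiP_ne_zero hb0) hR0ne, order_phiP hb0, hR0ord]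
  have hx1 : phiP a * Rr f (j+1) ≠ 0 := mul_ne_zero (phiP_ne_zero ha0) hR1ne
  have hx2 : phiP b * Rr f j ≠ 0 := mul_ne_zero (phiP_ne_zero hb0) hR0ne
  by_cases heq : (phiP a * Rr f (j+1)).order = (phiP b * Rr f j).order
  · -- equal orders: deg a > deg b, so deg q = deg a + deg Qd (j+1)
    have hd : a.natDegree = b.natDegree + ((Qd f (j+2)).natDegree - (Qd f (j+1)).natDegree) := by
      rw [ho1, ho2] at heq
      have := Qd_natDegree_lt hf j
      omega
    have hba : b.natDegree < a.natDegree := by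
      have := Qd_natDegree_lt hf j
      omega
    have haQ : (a * Qd f (j+1)).degree
        = ((a.natDegree + (Qd f (j+1)).natDegree : ℕ) : WithBot ℕ) := by
      rw [Polynomial.degree_mul, Polynomial.degree_eq_natDegree ha0,
        Polynomial.degree_eq_natDegree (Qd_spec hf j).1]
      push_cast; rfl
    have hdeglt : (b * Qd f j).degree < (a * Qd f (j+1)).degree := by
      by_cases h0 : Qd f j = 0
      · rw [h0, mul_zero, Polynomial.degree_zero, haQ]; exact WithBot.bot_lt_coe _
      · have hbQ : (b * Qd f j).degree
            = ((b.natDegree + (Qd f j).natDegree : ℕ) : WithBot ℕ) := by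
          rw [Polynomial.degree_mul, Polynomial.degree_eq_natDegree hb0,
            Polynomial.degree_eq_natDegree h0]
          push_cast; rfl
        have h5 : (Qd f j).natDegree ≤ (Qd f (j+1)).natDegree :=
          (Polynomial.natDegree_lt_natDegree h0 (Qd_spec hf j).2.2).le
        rw [haQ, hbQ]
        exact_mod_cast
          (by omega : b.natDegree + (Qd f j).natDegree
            < a.natDegree + (Qd f (j+1)).natDegree)
    have hq_deg : q.natDegree = (a * Qd f (j+1)).natDegree := by
      rw [← haq]
      rw [Polynomial.natDegree_eq_of_degree_eq
        (Polynomial.degree_add_eq_left_of_degree_lt hdeglt)]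
    rw [hq_deg, Polynomial.natDegree_mul ha0 (Qd_spec hf j).1]
    omega
  · -- distinct orders: order of sum is the min, which is ≤ deg Qd (j+1), contradiction
    exfalso
    have hmin : (cfQuot f 0 * phiP q - phiP p).order
        = min (phiP a * Rr f (j+1)).order (phiP b * Rr f j).order := by
      rcases lt_or_gt_of_ne heq with hlt | hgt
      · rw [hdecomp, order_add_left hx1 (Or.inr hlt), min_eq_left hlt.le]
      · rw [hdecomp, add_comm, order_add_left hx2 (Or.inr hgt), min_eq_right hgt.le]
    rw [hmin, ho1, ho2] at h
    rcases le_or_gt (phiP a * Rr f (j+1)).order (phiP b * Rr f j).order with hle | hlt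
    · rw [ho1, ho2] at hle
      have hmm : min (-((a.natDegree : ℤ)) + ((Qd f (j+2)).natDegree : ℤ))
          (-((b.natDegree : ℤ)) + ((Qd f (j+1)).natDegree : ℤ))
          = -((a.natDegree : ℤ)) + ((Qd f (j+2)).natDegree : ℤ) := min_eq_left hle
      rw [hmm] at h
      omega
    · rw [ho1, ho2] at hlt
      have hmm : min (-((a.natDegree : ℤ)) + ((Qd f (j+2)).natDegree : ℤ))
          (-((b.natDegree : ℤ)) + ((Qd f (j+1)).natDegree : ℤ))
          = -((b.natDegree : ℤ)) + ((Qd f (j+1)).natDegree : ℤ) := min_eq_right hlt.le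
      rw [hmm] at h
      omega

lemma coeff_mul_phiP (g : LaurentSeries F) (q : Polynomial F) (z : ℤ) :
    (g * phiP q).coeff z
      = ∑ j ∈ Finset.range (q.natDegree + 1), q.coeff j * g.coeff (z + j) := by
  rw [show (phiP q : LaurentSeries F)
      = Polynomial.eval₂ (algebraMap F (LaurentSeries F)) (tLS F) q from rfl,
    Polynomial.eval₂_eq_sum_range, Finset.mul_sum]
  refine Eq.trans (map_sum (HahnSeries.coeff.addMonoidHom z) _ _) ?_
  simp only [HahnSeries.coeff.addMonoidHom_apply]
  refine Finset.sum_congr rfl fun j _ => ?_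
  rw [algebraMap_LS, tLS_pow, HahnSeries.C_apply, HahnSeries.single_mul_single, zero_add,
    mul_one]
  conv_lhs => rw [show z = (z + j) + (-(j : ℤ)) by ring]
  rw [HahnSeries.coeff_mul_single_add, mul_comm]

lemma coeff_sum_C_mul_X_pow (w : ℕ → F) (N : ℕ) (i : ℕ) :
    (∑ j ∈ Finset.range N, Polynomial.C (w j) * Polynomial.X ^ j).coeff i
      = if i < N then w i else 0 := by
  classical
  rw [Polynomial.finset_sum_coeff]
  have h1 : ∀ j ∈ Finset.range N,
      (Polynomial.C (w j) * Polynomial.X ^ j).coeff i = if j = i then w j else 0 := by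
    intro j _
    rw [Polynomial.coeff_C_mul, Polynomial.coeff_X_pow]
    by_cases h : i = j
    · rw [if_pos h, if_pos h.symm, mul_one]
    · rw [if_neg h, if_neg (Ne.symm h), mul_zero]
  rw [Finset.sum_congr rfl h1, Finset.sum_ite_eq' (Finset.range N)]
  by_cases hmem : i ∈ Finset.range N
  · rw [if_pos hmem, if_pos (Finset.mem_range.mp hmem)]
  · rw [if_neg hmem, if_neg (fun h => hmem (Finset.mem_range.mpr h))]

end Aux

/-- The entry `W̃[m, k]` on row `m` of the `k`-th diagonal of the number
wall of `S` is nonzero iff `m + 1` is a partial sum `∑_{i=1}^{j} deg A_i^{[Θ·t^k]}` of the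
degrees of the partial quotients of `⟨t^k Θ⟩`, where `Θ = t⁻¹ ∑ s_i t^{-i}`. -/
theorem wall_diag_eq_cf {K : Type} [Field K] [Fintype K] (S : ℕ → K)
    (hirr : ¬ IsRatLS (seriesOf S)) (k : ℕ) (m : ℕ) :
    wallEntry (extendSeq S) m ((m : ℤ) + k) ≠ 0 ↔
      ∃ j : ℕ, 1 ≤ j ∧
        (m : ℤ) + 1 =
          ∑ i ∈ Finset.Icc 1 j, degZ (cfPQ (fracPart (tLS K ^ k * seriesOf S)) i) := by
  classical
  set Θ : LaurentSeries K := fracPart (tLS K ^ k * seriesOf S) with hΘ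
  -- irrationality of Θ
  have htk : IsRatLS ((tLS K) ^ k) := isRatLS_pow isRatLS_tLS k
  have htkne : (tLS K) ^ k ≠ 0 := pow_ne_zero _ tLS_ne_zero
  have hirrΘ : ¬ IsRatLS Θ := by
    intro h
    apply hirr
    have h2 : IsRatLS (tLS K ^ k * seriesOf S) := by
      have h3 : tLS K ^ k * seriesOf S = polyPart (tLS K ^ k * seriesOf S) + Θ := by
        rw [hΘ]; unfold fracPart; ring
      rw [h3]; exact isRatLS_add (isRatLS_polyPart _) h
    have h3 : seriesOf S = ((tLS K)^k)⁻¹ * (tLS K ^ k * seriesOf S) := by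
      rw [← mul_assoc, inv_mul_cancel₀ htkne, one_mul]
    rw [h3]; exact isRatLS_mul (isRatLS_inv htk) h2
  -- coefficients of Θ
  have hg : tLS K ^ k * seriesOf S
      = HahnSeries.single ((1 : ℤ) - k) 1
          * HahnSeries.ofPowerSeries ℤ K (PowerSeries.mk S) := by
    rw [seriesOf, tLS_pow, ← mul_assoc, HahnSeries.single_mul_single, mul_one,
      show (-(k : ℤ) + 1) = 1 - k from by ring]
  have hcoeff : ∀ n : ℕ, Θ.coeff ((n : ℤ) + 1) = S (k + n) := by
    intro n
    rw [hΘ, fracPart_coeff, if_neg (by omega), hg,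
      show ((n : ℤ) + 1) = ((n + k : ℕ) : ℤ) + ((1 : ℤ) - k) from by push_cast; ring,
      HahnSeries.coeff_single_mul_add, one_mul, HahnSeries.ofPowerSeries_apply_coeff,
      PowerSeries.coeff_mk]
    congr 1; omega
  -- the Hankel matrix
  set Hm : Matrix (Fin (m+1)) (Fin (m+1)) K :=
    Matrix.of (fun i j : Fin (m+1) => S (k + ((i : ℕ) + j))) with hHm
  -- Step 1 : the wall entry is (up to sign) the Hankel determinant
  have hwall : wallEntry (extendSeq S) m ((m : ℤ) + k) ≠ 0 ↔ Hm.det ≠ 0 := by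
    have hmat : wallEntry (extendSeq S) m ((m : ℤ) + k)
        = (Hm.submatrix (Fin.revPerm : Equiv.Perm (Fin (m+1))) id).det := by
      rw [wallEntry]
      congr 1
      ext i j
      have hi : (i : ℕ) ≤ m := by omega
      have hj : (j : ℕ) ≤ m := by omega
      have hrev : ((Fin.revPerm i : Fin (m+1)) : ℕ) = m - i := by
        simp [Fin.revPerm, Fin.val_rev]
      show extendSeq S ((m : ℤ) + k - i + j)
        = S (k + (((Fin.revPerm i : Fin (m+1)) : ℕ) + j))
      rw [extendSeq, if_pos (by omega), hrev]
      congr 1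
      omega
    rw [hmat, Matrix.det_permute]
    rcases Int.units_eq_one_or (Equiv.Perm.sign (Fin.revPerm : Equiv.Perm (Fin (m+1))))
        with hs | hs <;> rw [hs] <;> simp
  -- Step 2 : key coefficient computation
  have hkey : ∀ q : Polynomial K, q.natDegree ≤ m → ∀ n : ℕ, n ≤ m →
      (Θ * phiP q).coeff ((n : ℤ) + 1)
        = ∑ j ∈ Finset.range (m+1), S (k + (n + j)) * q.coeff j := by
    intro q hqd n hn
    rw [coeff_mul_phiP]
    rw [Finset.sum_subset (Finset.range_subset_range.mpr (by omega : q.natDegree + 1 ≤ m + 1))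
      (fun j _ hj2 => by
        rw [Polynomial.coeff_eq_zero_of_natDegree_lt
          (by simp only [Finset.mem_range] at hj2; omega), zero_mul])]
    refine Finset.sum_congr rfl fun j hj => ?_
    rw [show ((n : ℤ) + 1 + j) = ((n + j : ℕ) : ℤ) + 1 from by push_cast; ring,
      hcoeff (n + j), mul_comm]
  -- Step 3 : Hankel determinant vanishes iff a small polynomial kills the coefficients
  have hker : Hm.det = 0 ↔ ∃ q : Polynomial K, q ≠ 0 ∧ q.natDegree ≤ m ∧
      ∀ n : ℕ, n ≤ m → (Θ * phiP q).coeff ((n : ℤ) + 1) = 0 := by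
    constructor
    · intro hdet
      obtain ⟨v, hv0, hv⟩ := (Matrix.exists_mulVec_eq_zero_iff).mpr hdet
      set w : ℕ → K := fun j => if h : j < m + 1 then v ⟨j, h⟩ else 0 with hw
      set q : Polynomial K :=
        ∑ j ∈ Finset.range (m+1), Polynomial.C (w j) * Polynomial.X ^ j with hq
      have hqc : ∀ i : ℕ, q.coeff i = if i < m + 1 then w i else 0 := fun i =>
        coeff_sum_C_mul_X_pow w (m+1) i
      have hqd : q.natDegree ≤ m := by
        apply Polynomial.natDegree_le_iff_coeff_eq_zero.mpr
        intro N hN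
        rw [hqc, if_neg (by omega)]
      have hqne : q ≠ 0 := by
        obtain ⟨i, hi⟩ := Function.ne_iff.mp hv0
        intro h0
        apply hi
        have h1 := hqc (i : ℕ)
        rw [h0, Polynomial.coeff_zero, if_pos i.isLt] at h1
        exact (by simpa [hw] using h1.symm : (i : ℕ) ≤ m → v i = 0) (by omega)
      refine ⟨q, hqne, hqd, fun n hn => ?_⟩
      rw [hkey q hqd n hn]
      have hrow := congrFun hv ⟨n, by omega⟩
      have hrow2 : ∑ j : Fin (m+1), Hm ⟨n, by omega⟩ j * v j = 0 := by
        simpa [Matrix.mulVec, dotProduct] using hrow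
      rw [← Fin.sum_univ_eq_sum_range (fun j => S (k + (n + j)) * q.coeff j) (m+1), ← hrow2]
      refine Finset.sum_congr rfl fun j _ => ?_
      rw [hqc, if_pos j.isLt, hw]
      simp [hHm]
      exact fun h => absurd j.isLt (by omega)
    · rintro ⟨q, hqne, hqd, hqz⟩
      apply (Matrix.exists_mulVec_eq_zero_iff).mp
      refine ⟨fun j => q.coeff j, ?_, ?_⟩
      · intro h0
        have h1 := congrFun h0 ⟨q.natDegree, by omega⟩
        exact (Polynomial.leadingCoeff_ne_zero.mpr hqne) h1
      · funext i
        have h2 := hqz i (by omega)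
        rw [hkey q hqd i (by omega)] at h2
        rw [← Fin.sum_univ_eq_sum_range (fun j => S (k + (i + j)) * q.coeff j) (m+1)] at h2
        simpa [Matrix.mulVec, dotProduct, hHm] using h2
  -- Step 4 : translation to continued fraction data
  have hcf : (∃ q : Polynomial K, q ≠ 0 ∧ q.natDegree ≤ m ∧
        ∀ n : ℕ, n ≤ m → (Θ * phiP q).coeff ((n : ℤ) + 1) = 0)
      ↔ ¬ ∃ j : ℕ, 1 ≤ j ∧ (m : ℤ) + 1 = ∑ i ∈ Finset.Icc 1 j, degZ (cfPQ Θ i) := by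
    constructor
    · rintro ⟨q, hqne, hqd, hqz⟩ ⟨j, hj1, hjsum⟩
      have hsum : ((Qd Θ (j+1)).natDegree : ℤ) = (m : ℤ) + 1 := by
        rw [(Qd_spec hirrΘ j).2.1, ← hjsum]
      set p : Polynomial K := ptp (Θ * phiP q) with hp
      set E : LaurentSeries K := Θ * phiP q - phiP p with hE
      have hEfrac : E = fracPart (Θ * phiP q) := by
        rw [hE, hp, phiP_ptp, fracPart]
      have hEne : E ≠ 0 := by
        intro h0
        apply hirrΘ
        have h1 : Θ * phiP q = phiP p := by
          have := sub_eq_zero.mp (hE ▸ h0)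
          exact this
        have h2 : Θ = phiP p * (phiP q)⁻¹ := by
          rw [← h1, mul_inv_cancel_right₀ (phiP_ne_zero hqne)]
        rw [h2]
        exact isRatLS_mul (isRatLS_phiP p) (isRatLS_inv (isRatLS_phiP q))
      have hzero : ∀ z : ℤ, z ≤ (m : ℤ) + 1 → E.coeff z = 0 := by
        intro z hz
        rw [hEfrac, fracPart_coeff]
        by_cases h4 : z ≤ 0
        · rw [if_pos h4]
        · rw [if_neg h4]
          have h6 := hqz (z - 1).toNat (by omega)
          rw [show z = (((z - 1).toNat : ℤ) + 1) from by omega]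
          exact h6
      have hEord : ((m : ℤ) + 1) < E.order := by
        by_contra hcon
        push_neg at hcon
        exact (mt HahnSeries.coeff_order_eq_zero.mp hEne) (hzero _ hcon)
      have h7 := best_approx hirrΘ j q p hqne (by rw [show cfQuot Θ 0 = Θ from rfl, ← hE]; omega)
      omega
    · intro hno
      have hfind : ∃ N : ℕ, m < (Qd Θ (N+1)).natDegree :=
        ⟨m + 1, by have := le_Qd_natDegree hirrΘ (m+1); omega⟩
      set N₀ := Nat.find hfind with hN₀
      have hN₀spec := Nat.find_spec hfind
      have hN₀pos : 1 ≤ N₀ := by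
        rcases Nat.eq_zero_or_pos N₀ with h | h
        · exfalso
          rw [← hN₀, h] at hN₀spec
          have : Qd Θ 1 = 1 := rfl
          rw [this, Polynomial.natDegree_one] at hN₀spec
          omega
        · exact h
      set J := N₀ - 1 with hJ
      have hJ1 : (Qd Θ (J+1)).natDegree ≤ m := by
        have := Nat.find_min hfind (m := J) (by omega)
        omega
      have hJN : J + 1 = N₀ := by omega
      have hJ2 : m < (Qd Θ (J+2)).natDegree := by
        have : m < (Qd Θ (J+1+1)).natDegree := by rw [hJN]; exact hN₀spec
        exact this
      have hJ3 : m + 2 ≤ (Qd Θ (J+2)).natDegree := by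
        rcases Nat.lt_or_ge (Qd Θ (J+2)).natDegree (m+2) with h | h
        · exfalso
          apply hno
          refine ⟨J+1, by omega, ?_⟩
          rw [← (Qd_spec hirrΘ (J+1)).2.1]
          show ((m : ℤ) + 1) = ((Qd Θ (J+2)).natDegree : ℤ)
          omega
        · exact h
      obtain ⟨hQne, hQsum, _⟩ := Qd_spec hirrΘ J
      refine ⟨Qd Θ (J+1), hQne, ?_, ?_⟩
      · exact hJ1
      · intro n hn
        have hdec : Θ * phiP (Qd Θ (J+1)) = Rr Θ (J+1) + phiP (Pd Θ (J+1)) := by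
          rw [Rr, show cfQuot Θ 0 = Θ from rfl]; ring
        rw [hdec, HahnSeries.coeff_add,
          HahnSeries.coeff_eq_zero_of_lt_order (by
            rw [(order_Rr hirrΘ (J+1)).2]
            show ((n : ℤ) + 1) < ((Qd Θ (J+2)).natDegree : ℤ)
            omega),
          phiP_coeff_pos _ (by omega), add_zero]
  -- Assemble
  rw [hwall, ne_eq, hker, hcf, not_not]

end EscapeOfMass
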